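/- For n ≥ 0, k ≥ 1, the inverse submonoid of I_{n+k} generated by the partial permutation [1,…,n] ∪ (n+1,…,n+k) is isomorphic to the inverse monoid S_{n,k} presented by ⟨x | x^n x^{-n} = x^{n+1} x^{-(n+1)}, x^n x^{-n} = x^n x^{-n} x^k⟩. -/

import Mathlib

/-- The symmetric inverse monoid structure on partial bijections of a set. -/
instance pequivMonoid (α : Type*) : Monoid (PEquiv α α) where
  mul f g := f.trans g
  one := PEquiv.refl α
  mul_assoc := PEquiv.trans_assoc
  one_mul := PEquiv.refl_trans
  mul_one := PEquiv.trans_refl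

/-- `f` is a chain of length `m` (i.e. `m` pairs): there are distinct points
`c 0, …, c m` with `f` mapping `c i ↦ c (i+1)` and nothing else. -/
def IsChainPP {n : ℕ} (f : PEquiv (Fin n) (Fin n)) (m : ℕ) : Prop :=
  ∃ c : Fin (m + 1) → Fin n, Function.Injective c ∧
    ∀ a b : Fin n, f a = some b ↔ ∃ i : Fin m, a = c i.castSucc ∧ b = c i.succ


/-- The partial permutation \`[1,…,a] ∪ (a+1,…,a+b)\` of \`{1,…,a+b}\` (0-indexed): the
chain \`i ↦ i + 1\` on \`{0,…,a-1}\` together with the cyclic permutation of \`{a,…,a+b-1}\`. -/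
def IsChainCycle {a b : ℕ} (f : PEquiv (Fin (a + b)) (Fin (a + b))) : Prop :=
  ∀ i j : Fin (a + b), f i = some j ↔
    ((i.val + 1 < a ∧ j.val = i.val + 1) ∨
      (a ≤ i.val ∧ 0 < b ∧ j.val = a + ((i.val + 1 - a) % b)))


/-- Formal inverse of a word over the alphabet {x, x⁻¹} (with \`true\` ↦ x, \`false\` ↦ x⁻¹). -/
def winv (w : FreeMonoid Bool) : FreeMonoid Bool :=
  FreeMonoid.ofList ((FreeMonoid.toList w).reverse.map not)

/-- The generator x. -/
def X : FreeMonoid Bool := FreeMonoid.of true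

/-- The formal inverse x⁻¹ of the generator. -/
def Xi : FreeMonoid Bool := FreeMonoid.of false

/-- The Vagner relations: \`w w⁻¹ w = w\` and idempotents \`w w⁻¹\` commute. -/
def vagner (u v : FreeMonoid Bool) : Prop :=
  (∃ w, u = w * winv w * w ∧ v = w) ∨
    (∃ w z, u = w * winv w * (z * winv z) ∧ v = z * winv z * (w * winv w))


/-- The congruence defining the inverse monoid presentation
\`⟨x | xⁿx⁻ⁿ = xⁿ⁺¹x⁻⁽ⁿ⁺¹⁾, xⁿx⁻ⁿ = xⁿx⁻ⁿxᵏ⟩\`. -/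
def snkCon (n k : ℕ) : Con (FreeMonoid Bool) :=
  conGen (fun u v => vagner u v ∨
    (u = X ^ n * Xi ^ n ∧ v = X ^ (n + 1) * Xi ^ (n + 1)) ∨
    (u = X ^ n * Xi ^ n ∧ v = X ^ n * Xi ^ n * X ^ k))

namespace SNK

lemma winv_mul (u v : FreeMonoid Bool) : winv (u * v) = winv v * winv u := by
  unfold winv
  rw [FreeMonoid.toList_mul, List.reverse_append, List.map_append, FreeMonoid.ofList_append]

lemma winv_one : winv (1 : FreeMonoid Bool) = 1 := rfl
lemma winv_X : winv X = Xi := rfl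
lemma winv_Xi : winv Xi = X := rfl

lemma winv_X_pow (a : ℕ) : winv (X ^ a) = Xi ^ a := by
  induction a with
  | zero => simp [winv_one]
  | succ a ih => rw [pow_succ, winv_mul, winv_X, ih, pow_succ']

lemma winv_Xi_pow (a : ℕ) : winv (Xi ^ a) = X ^ a := by
  induction a with
  | zero => simp [winv_one]
  | succ a ih => rw [pow_succ, winv_mul, winv_Xi, ih, pow_succ']

variable (n k : ℕ)

def pi : FreeMonoid Bool →* (snkCon n k).Quotient := Con.mk' _

def xg : (snkCon n k).Quotient := pi n k X
def yg : (snkCon n k).Quotient := pi n k Xi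

lemma pi_base {u v : FreeMonoid Bool}
    (h : vagner u v ∨ (u = X ^ n * Xi ^ n ∧ v = X ^ (n + 1) * Xi ^ (n + 1)) ∨
      (u = X ^ n * Xi ^ n ∧ v = X ^ n * Xi ^ n * X ^ k)) :
    pi n k u = pi n k v :=
  (Con.eq _).2 (ConGen.Rel.of _ _ h)

lemma pi_X : pi n k X = xg n k := rfl
lemma pi_Xi : pi n k Xi = yg n k := rfl

lemma xyx (a : ℕ) : xg n k ^ a * yg n k ^ a * xg n k ^ a = xg n k ^ a := by
  have := pi_base n k (u := X ^ a * winv (X ^ a) * X ^ a) (v := X ^ a)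
    (Or.inl (Or.inl ⟨X ^ a, rfl, rfl⟩))
  simpa only [winv_X_pow, winv_Xi_pow, map_mul, map_pow, pi_X, pi_Xi] using this

lemma yxy (a : ℕ) : yg n k ^ a * xg n k ^ a * yg n k ^ a = yg n k ^ a := by
  have := pi_base n k (u := Xi ^ a * winv (Xi ^ a) * Xi ^ a) (v := Xi ^ a)
    (Or.inl (Or.inl ⟨Xi ^ a, rfl, rfl⟩))
  simpa only [winv_X_pow, winv_Xi_pow, map_mul, map_pow, pi_X, pi_Xi] using this

lemma pq_comm (a b : ℕ) :
    (xg n k ^ a * yg n k ^ a) * (yg n k ^ b * xg n k ^ b)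
      = (yg n k ^ b * xg n k ^ b) * (xg n k ^ a * yg n k ^ a) := by
  have := pi_base n k (u := X ^ a * winv (X ^ a) * (Xi ^ b * winv (Xi ^ b)))
    (v := Xi ^ b * winv (Xi ^ b) * (X ^ a * winv (X ^ a)))
    (Or.inl (Or.inr ⟨X ^ a, Xi ^ b, rfl, rfl⟩))
  simpa only [winv_X_pow, winv_Xi_pow, map_mul, map_pow, pi_X, pi_Xi] using this

lemma rel_a : xg n k ^ n * yg n k ^ n = xg n k ^ (n + 1) * yg n k ^ (n + 1) := by
  have := pi_base n k (Or.inr (Or.inl ⟨rfl, rfl⟩))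
  simpa only [winv_X_pow, winv_Xi_pow, map_mul, map_pow, pi_X, pi_Xi] using this

lemma rel_b : xg n k ^ n * yg n k ^ n = xg n k ^ n * yg n k ^ n * xg n k ^ k := by
  have := pi_base n k (Or.inr (Or.inr ⟨rfl, rfl⟩))
  simpa only [winv_X_pow, winv_Xi_pow, map_mul, map_pow, pi_X, pi_Xi] using this

end SNK
namespace SNK
variable (n k : ℕ)

local notation "x" => xg n k
local notation "y" => yg n k

lemma xa_abs {a b : ℕ} (h : a ≤ b) : x ^ a * y ^ a * x ^ b = x ^ b := by
  obtain ⟨c, rfl⟩ := Nat.exists_eq_add_of_le h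
  rw [pow_add, ← mul_assoc, xyx]

lemma ya_abs {a b : ℕ} (h : a ≤ b) : y ^ a * x ^ a * y ^ b = y ^ b := by
  obtain ⟨c, rfl⟩ := Nat.exists_eq_add_of_le h
  rw [pow_add, ← mul_assoc, yxy]

lemma p_idem (a : ℕ) : (x ^ a * y ^ a) * (x ^ a * y ^ a) = x ^ a * y ^ a := by
  rw [← mul_assoc, xyx]

lemma q_idem (a : ℕ) : (y ^ a * x ^ a) * (y ^ a * x ^ a) = y ^ a * x ^ a := by
  rw [← mul_assoc, yxy]

lemma p_absorb {a b : ℕ} (h : a ≤ b) :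
    (x ^ b * y ^ b) * (x ^ a * y ^ a) = x ^ b * y ^ b := by
  obtain ⟨c, rfl⟩ := Nat.exists_eq_add_of_le h
  have : y ^ (a + c) * (x ^ a * y ^ a) = y ^ (a + c) := by
    rw [Nat.add_comm a c, pow_add, mul_assoc, ← mul_assoc (y^a), yxy]
  rw [mul_assoc, this]

lemma p_absorb' {a b : ℕ} (h : a ≤ b) :
    (x ^ a * y ^ a) * (x ^ b * y ^ b) = x ^ b * y ^ b := by
  rw [← mul_assoc, xa_abs n k h]

lemma rel1' {m : ℕ} (h : n ≤ m) : x ^ m * y ^ m = x ^ n * y ^ n := by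
  induction m, h using Nat.le_induction with
  | base => rfl
  | succ m hm ih =>
    have : x ^ (m + 1) * y ^ (m + 1) = x * (x ^ m * y ^ m) * y := by
      rw [pow_succ' (xg n k), pow_succ (yg n k)]
      simp [mul_assoc]
    rw [this, ih]
    have : x * (x ^ n * y ^ n) * y = x ^ (n + 1) * y ^ (n + 1) := by
      rw [pow_succ' (xg n k), pow_succ (yg n k)]
      simp [mul_assoc]
    rw [this, ← rel_a]

lemma qn_pj (j : ℕ) :
    (x ^ j * y ^ j) * (y ^ n * x ^ n) = y ^ n * x ^ n := by
  have key : y ^ n * x ^ n = (y ^ n * x ^ n) * ((x ^ j * y ^ j) * (y ^ n * x ^ n)) := by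
    calc y ^ n * x ^ n = (y ^ n * x ^ n) * (y ^ n * x ^ n) := (q_idem n k n).symm
    _ = y ^ n * (x ^ n * y ^ n) * x ^ n := by simp [mul_assoc]
    _ = y ^ n * (x ^ (n + j) * y ^ (n + j)) * x ^ n := by rw [rel1' n k (Nat.le_add_right n j)]
    _ = y ^ n * (x ^ n * (x ^ j * y ^ j) * y ^ n) * x ^ n := by
          rw [pow_add (xg n k), Nat.add_comm n j, pow_add (yg n k)]
          simp [mul_assoc]
    _ = (y ^ n * x ^ n) * ((x ^ j * y ^ j) * (y ^ n * x ^ n)) := by simp [mul_assoc]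
  have : y ^ n * x ^ n = (x ^ j * y ^ j) * (y ^ n * x ^ n) := by
    calc y ^ n * x ^ n = (y ^ n * x ^ n) * ((x ^ j * y ^ j) * (y ^ n * x ^ n)) := key
    _ = (y ^ n * x ^ n) * ((y ^ n * x ^ n) * (x ^ j * y ^ j)) := by rw [pq_comm]
    _ = ((y ^ n * x ^ n) * (y ^ n * x ^ n)) * (x ^ j * y ^ j) := by simp [mul_assoc]
    _ = (y ^ n * x ^ n) * (x ^ j * y ^ j) := by rw [q_idem]
    _ = (x ^ j * y ^ j) * (y ^ n * x ^ n) := (pq_comm n k j n).symm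
  exact this.symm

end SNK
namespace SNK
variable (n k : ℕ)

local notation "x" => xg n k
local notation "y" => yg n k

lemma yn_abs (j : ℕ) : (x ^ j * y ^ j) * y ^ n = y ^ n := by
  have h1 : y ^ n * x ^ n * y ^ n = y ^ n := yxy n k n
  calc (x ^ j * y ^ j) * y ^ n = (x ^ j * y ^ j) * ((y ^ n * x ^ n) * y ^ n) := by rw [h1]
    _ = ((x ^ j * y ^ j) * (y ^ n * x ^ n)) * y ^ n := by simp [mul_assoc]
    _ = (y ^ n * x ^ n) * y ^ n := by rw [qn_pj]
    _ = y ^ n := h1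

lemma pq_comm1 (a : ℕ) : (x ^ a * y ^ a) * (y * x) = (y * x) * (x ^ a * y ^ a) := by
  have := pq_comm n k a 1; simpa [pow_one] using this

lemma pq_comm1' (b : ℕ) : (x * y) * (y ^ b * x ^ b) = (y ^ b * x ^ b) * (x * y) := by
  have := pq_comm n k 1 b; simpa [pow_one] using this

lemma xyx1 : x * y * x = x := by have := xyx n k 1; simpa [pow_one] using this
lemma yxy1 : y * x * y = y := by have := yxy n k 1; simpa [pow_one] using this

lemma E_x : (x ^ n * y ^ n) * x = x * (x ^ n * y ^ n) := by
  calc (x ^ n * y ^ n) * x = (x ^ (n+1) * y ^ (n+1)) * x := by rw [← rel_a]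
    _ = (x * (x ^ n * y ^ n)) * (y * x) := by
        rw [pow_succ' (xg n k), pow_succ (yg n k)]; simp [mul_assoc]
    _ = x * ((x ^ n * y ^ n) * (y * x)) := by rw [mul_assoc]
    _ = x * ((y * x) * (x ^ n * y ^ n)) := by rw [pq_comm1]
    _ = (x * y * x) * (x ^ n * y ^ n) := by simp [mul_assoc]
    _ = x * (x ^ n * y ^ n) := by rw [xyx1]

lemma E_xpow (j : ℕ) : (x ^ n * y ^ n) * x ^ j = x ^ j * (x ^ n * y ^ n) := by
  induction j with
  | zero => simp
  | succ j ih =>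
    calc (x ^ n * y ^ n) * x ^ (j+1) = ((x ^ n * y ^ n) * x ^ j) * x := by
          simp [pow_succ, mul_assoc]
    _ = (x ^ j * (x ^ n * y ^ n)) * x := by rw [ih]
    _ = x ^ j * ((x ^ n * y ^ n) * x) := by rw [mul_assoc]
    _ = x ^ j * (x * (x ^ n * y ^ n)) := by rw [E_x]
    _ = x ^ (j+1) * (x ^ n * y ^ n) := by rw [← mul_assoc, ← pow_succ]

lemma E_p1 : (x ^ n * y ^ n) * (x * y) = x ^ n * y ^ n := by
  calc (x ^ n * y ^ n) * (x * y) = (x ^ (n+1) * y ^ (n+1)) * (x ^ 1 * y ^ 1) := by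
        rw [← rel_a]; simp [pow_one]
    _ = x ^ (n+1) * y ^ (n+1) := p_absorb n k (Nat.le_add_left 1 n)
    _ = x ^ n * y ^ n := by rw [← rel_a]

lemma E_xk : (x ^ n * y ^ n) * x ^ k = x ^ n * y ^ n := (rel_b n k).symm

lemma E_y_eq (hk : 1 ≤ k) : (x ^ n * y ^ n) * y = (x ^ n * y ^ n) * x ^ (k-1) := by
  calc (x ^ n * y ^ n) * y = ((x ^ n * y ^ n) * x ^ k) * y := by rw [E_xk]
    _ = ((x ^ n * y ^ n) * x ^ (k-1)) * (x * y) := by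
        have : (k - 1) + 1 = k := Nat.succ_pred_eq_of_pos hk
        rw [← this, pow_succ]; simp [mul_assoc]
    _ = (x ^ (k-1) * (x ^ n * y ^ n)) * (x * y) := by rw [E_xpow]
    _ = x ^ (k-1) * ((x ^ n * y ^ n) * (x * y)) := by rw [mul_assoc]
    _ = x ^ (k-1) * (x ^ n * y ^ n) := by rw [E_p1]
    _ = (x ^ n * y ^ n) * x ^ (k-1) := (E_xpow n k (k-1)).symm

lemma E_ypowk (hk : 1 ≤ k) (b : ℕ) :
    (x ^ n * y ^ n) * y ^ b = (x ^ n * y ^ n) * x ^ ((k-1) * b) := by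
  induction b with
  | zero => simp
  | succ b ih =>
    calc (x ^ n * y ^ n) * y ^ (b+1) = ((x ^ n * y ^ n) * y ^ b) * y := by
          simp [pow_succ, mul_assoc]
    _ = ((x ^ n * y ^ n) * x ^ ((k-1)*b)) * y := by rw [ih]
    _ = (x ^ ((k-1)*b) * (x ^ n * y ^ n)) * y := by rw [E_xpow]
    _ = x ^ ((k-1)*b) * ((x ^ n * y ^ n) * y) := by rw [mul_assoc]
    _ = x ^ ((k-1)*b) * ((x ^ n * y ^ n) * x ^ (k-1)) := by rw [E_y_eq n k hk]
    _ = x ^ ((k-1)*b) * (x ^ (k-1) * (x ^ n * y ^ n)) := by rw [E_xpow]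
    _ = (x ^ ((k-1)*b) * x ^ (k-1)) * (x ^ n * y ^ n) := by rw [mul_assoc]
    _ = x ^ ((k-1)*(b+1)) * (x ^ n * y ^ n) := by rw [← pow_add, Nat.mul_succ]
    _ = (x ^ n * y ^ n) * x ^ ((k-1)*(b+1)) := (E_xpow n k _).symm

lemma E_yn {b : ℕ} (h : n ≤ b) : (x ^ n * y ^ n) * y ^ b = y ^ b := by
  obtain ⟨c, rfl⟩ := Nat.exists_eq_add_of_le h
  rw [pow_add, ← mul_assoc, yn_abs]

lemma G_mod (j : ℕ) : (x ^ n * y ^ n) * x ^ (j + k) = (x ^ n * y ^ n) * x ^ j := by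
  rw [Nat.add_comm j k, pow_add, ← mul_assoc, E_xk]

lemma G_reduce (hk : 1 ≤ k) (j : ℕ) :
    (x ^ n * y ^ n) * x ^ j = (x ^ n * y ^ n) * x ^ (j % k) := by
  induction j using Nat.strong_induction_on with
  | _ j ih =>
    rcases lt_or_ge j k with h | h
    · rw [Nat.mod_eq_of_lt h]
    · obtain ⟨c, rfl⟩ := Nat.exists_eq_add_of_le h
      rw [Nat.add_comm k c, G_mod, ih c (by omega), Nat.add_comm c k, Nat.add_mod_left]

lemma DC (hk : 1 ≤ k) (a t : ℕ) {b : ℕ} (hb : n ≤ b) :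
    x ^ a * y ^ b * x ^ t = (x ^ n * y ^ n) * x ^ ((a + (k-1) * b + t) % k) := by
  calc x ^ a * y ^ b * x ^ t = x ^ a * ((x ^ n * y ^ n) * y ^ b) * x ^ t := by
        rw [E_yn n k hb, mul_assoc]
    _ = x ^ a * ((x ^ n * y ^ n) * x ^ ((k-1)*b)) * x ^ t := by rw [E_ypowk n k hk]
    _ = (x ^ a * (x ^ n * y ^ n)) * (x ^ ((k-1)*b) * x ^ t) := by simp [mul_assoc]
    _ = ((x ^ n * y ^ n) * x ^ a) * (x ^ ((k-1)*b) * x ^ t) := by rw [E_xpow]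
    _ = (x ^ n * y ^ n) * (x ^ a * (x ^ ((k-1)*b) * x ^ t)) := by rw [mul_assoc]
    _ = (x ^ n * y ^ n) * x ^ (a + (k-1)*b + t) := by rw [← pow_add, ← pow_add, Nat.add_assoc]
    _ = (x ^ n * y ^ n) * x ^ ((a + (k-1)*b + t) % k) := G_reduce n k hk _

lemma SB (b' t' : ℕ) :
    y ^ (b' + t' + 1) * x ^ (t' + 1) * y = y ^ (b' + t' + 1) * x ^ t' := by
  calc y ^ (b' + t' + 1) * x ^ (t' + 1) * y
      = (y ^ (b'+1) * (y ^ t' * x ^ t')) * (x * y) := by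
        rw [show b' + t' + 1 = (b'+1) + t' by omega, pow_add]
        simp [pow_succ, mul_assoc]
    _ = y ^ (b'+1) * ((y ^ t' * x ^ t') * (x * y)) := by rw [mul_assoc]
    _ = y ^ (b'+1) * ((x * y) * (y ^ t' * x ^ t')) := by rw [← pq_comm1']
    _ = ((y ^ b' * (y * x)) * y) * (y ^ t' * x ^ t') := by
        rw [pow_succ]; simp [mul_assoc]
    _ = (y ^ b' * (y * x * y)) * (y ^ t' * x ^ t') := by simp [mul_assoc]
    _ = (y ^ b' * y) * (y ^ t' * x ^ t') := by rw [yxy1]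
    _ = y ^ (b' + t' + 1) * x ^ t' := by
        rw [show b' + t' + 1 = (b'+1) + t' by omega, pow_add]
        simp [pow_succ, mul_assoc]

lemma SA (a b : ℕ) : (x ^ a * y ^ b * x ^ b) * x = x ^ (a+1) * y ^ (b+1) * x ^ (b+1) := by
  symm
  calc x ^ (a+1) * y ^ (b+1) * x ^ (b+1)
      = (x ^ a * ((x * y) * (y ^ b * x ^ b))) * x := by
        rw [pow_succ (xg n k) a, pow_succ' (yg n k) b, pow_succ (xg n k) b]
        simp [mul_assoc]
    _ = (x ^ a * ((y ^ b * x ^ b) * (x * y))) * x := by rw [pq_comm1']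
    _ = (x ^ a * y ^ b * x ^ b) * (x * y * x) := by simp [mul_assoc]
    _ = (x ^ a * y ^ b * x ^ b) * x := by rw [xyx1]

end SNK
namespace SNK
variable (n k : ℕ)

local notation "x" => xg n k
local notation "y" => yg n k

lemma pi_of_true : pi n k (FreeMonoid.of true) = x := rfl
lemma pi_of_false : pi n k (FreeMonoid.of false) = y := rfl

lemma normal_form (hk : 1 ≤ k) (m : (snkCon n k).Quotient) :
    (∃ a b t, a ≤ b ∧ t ≤ b ∧ b < n ∧ m = x ^ a * y ^ b * x ^ t) ∨
    (∃ r, r < k ∧ m = (x ^ n * y ^ n) * x ^ r) := by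
  obtain ⟨w, rfl⟩ := Con.mk'_surjective (c := snkCon n k) m
  show (∃ a b t, a ≤ b ∧ t ≤ b ∧ b < n ∧ pi n k w = x ^ a * y ^ b * x ^ t) ∨
    (∃ r, r < k ∧ pi n k w = (x ^ n * y ^ n) * x ^ r)
  have key : ∀ l : List Bool,
      (∃ a b t, a ≤ b ∧ t ≤ b ∧ b < n ∧
        pi n k (FreeMonoid.ofList l) = x ^ a * y ^ b * x ^ t) ∨
      (∃ r, r < k ∧ pi n k (FreeMonoid.ofList l) = (x ^ n * y ^ n) * x ^ r) := by
    intro l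
    induction l using List.reverseRecOn with
    | nil =>
      rcases Nat.eq_zero_or_pos n with hn | hn
      · right
        refine ⟨0, hk, ?_⟩
        subst hn; simp [FreeMonoid.ofList_nil]
      · left
        exact ⟨0, 0, 0, le_refl 0, le_refl 0, hn, by simp [FreeMonoid.ofList_nil]⟩
    | append_singleton l g ih =>
      have hsplit : pi n k (FreeMonoid.ofList (l ++ [g]))
          = pi n k (FreeMonoid.ofList l) * pi n k (FreeMonoid.of g) := by
        rw [FreeMonoid.ofList_append, map_mul, FreeMonoid.ofList_singleton]
      rcases ih with ⟨a, b, t, hab, htb, hbn, hm⟩ | ⟨r, hr, hm⟩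
      · -- nondegenerate canonical form
        cases g with
        | true =>
          rw [hsplit, hm, pi_of_true]
          by_cases htlt : t < b
          · left
            exact ⟨a, b, t + 1, hab, htlt, hbn, by rw [mul_assoc, ← pow_succ]⟩
          · have htb' : t = b := by omega
            subst htb'
            rw [SA]
            by_cases hbn' : t + 1 < n
            · left
              exact ⟨a + 1, t + 1, t + 1, by omega, le_refl _, hbn', rfl⟩
            · have hnb : n ≤ t + 1 := by omega
              right
              exact ⟨(a + 1 + (k-1) * (t+1) + (t+1)) % k, Nat.mod_lt _ hk,
                DC n k hk (a+1) (t+1) hnb⟩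
        | false =>
          rw [hsplit, hm, pi_of_false]
          by_cases ht1 : 1 ≤ t
          · left
            refine ⟨a, b, t - 1, hab, by omega, hbn, ?_⟩
            have hSB := SB n k (b - t) (t - 1)
            rw [show b - t + (t-1) + 1 = b by omega, show t - 1 + 1 = t by omega] at hSB
            rw [mul_assoc, mul_assoc, ← mul_assoc (y ^ b), hSB, mul_assoc]
          · have ht0 : t = 0 := by omega
            subst ht0
            have hstep : x ^ a * y ^ b * x ^ 0 * y = x ^ a * y ^ (b+1) * x ^ 0 := by
              simp [pow_succ, mul_assoc]
            rw [hstep]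
            by_cases hbn' : b + 1 < n
            · left
              exact ⟨a, b + 1, 0, by omega, by omega, hbn', rfl⟩
            · have hnb : n ≤ b + 1 := by omega
              right
              exact ⟨(a + (k-1) * (b+1) + 0) % k, Nat.mod_lt _ hk, DC n k hk a 0 hnb⟩
      · -- degenerate canonical form
        cases g with
        | true =>
          rw [hsplit, hm, pi_of_true]
          right
          refine ⟨(r + 1) % k, Nat.mod_lt _ hk, ?_⟩
          rw [mul_assoc, ← pow_succ, G_reduce n k hk]
        | false =>
          rw [hsplit, hm, pi_of_false]
          right
          refine ⟨(r + (k - 1)) % k, Nat.mod_lt _ hk, ?_⟩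
          calc (x ^ n * y ^ n) * x ^ r * y
              = x ^ r * ((x ^ n * y ^ n) * y) := by rw [E_xpow, mul_assoc]
            _ = x ^ r * ((x ^ n * y ^ n) * x ^ (k-1)) := by rw [E_y_eq n k hk]
            _ = x ^ r * (x ^ n * y ^ n) * x ^ (k-1) := by simp [mul_assoc]
            _ = (x ^ n * y ^ n) * x ^ r * x ^ (k-1) := by rw [E_xpow]
            _ = (x ^ n * y ^ n) * x ^ (r + (k-1)) := by rw [mul_assoc, ← pow_add]
            _ = (x ^ n * y ^ n) * x ^ ((r + (k-1)) % k) := G_reduce n k hk _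
  exact key (FreeMonoid.toList w)

end SNK
namespace SNK

section PP
variable {α : Type*}

lemma pe_mul_apply (g h : PEquiv α α) (a : α) : (g * h) a = (g a).bind h := rfl
lemma pe_one_apply (a : α) : (1 : PEquiv α α) a = some a := rfl

lemma pe_vagner1 (g : PEquiv α α) : g * g.symm * g = g := by
  apply PEquiv.ext; intro a
  show ((g a).bind g.symm).bind g = g a
  cases h : g a with
  | none => rfl
  | some b =>
    have h2 : g.symm b = some a := (PEquiv.eq_some_iff g).2 h
    simp [h2, h]

lemma pe_idem_apply (g : PEquiv α α) (a : α) :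
    (g * g.symm) a = if (g a).isSome = true then some a else none := by
  show (g a).bind g.symm = _
  cases h : g a with
  | none => rfl
  | some b =>
    have h2 : g.symm b = some a := (PEquiv.eq_some_iff g).2 h
    simp [h2]

lemma pe_vagner2 (g h : PEquiv α α) :
    g * g.symm * (h * h.symm) = h * h.symm * (g * g.symm) := by
  apply PEquiv.ext; intro a
  show ((g * g.symm) a).bind (h * h.symm) = ((h * h.symm) a).bind (g * g.symm)
  rw [pe_idem_apply, pe_idem_apply]
  by_cases hg : (g a).isSome = true <;> by_cases hh : (h a).isSome = true <;>
    simp [hg, hh, pe_idem_apply]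

end PP

section Eval
variable {n k : ℕ} {f : PEquiv (Fin (n + k)) (Fin (n + k))}

lemma symm_pow (b : ℕ) : f.symm ^ b = (f ^ b).symm := by
  induction b with
  | zero => rfl
  | succ b ih =>
    rw [pow_succ', ih, pow_succ]
    show f.symm.trans (f ^ b).symm = ((f ^ b).trans f).symm
    rw [PEquiv.symm_trans_rev]

variable (hk : 1 ≤ k) (hf : IsChainCycle f)
include hk hf

lemma fpow_spec (a : ℕ) (i j : Fin (n + k)) :
    (f ^ a) i = some j ↔
      (i.val + a < n ∧ j.val = i.val + a) ∨
      (n ≤ i.val ∧ j.val = n + ((i.val - n + a) % k)) := by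
  induction a generalizing j with
  | zero =>
    rw [pow_zero, pe_one_apply]
    constructor
    · rintro h
      have hij : i = j := by exact_mod_cast Option.some_injective _ h
      subst hij
      rcases lt_or_ge i.val n with hi | hi
      · exact Or.inl ⟨by omega, by omega⟩
      · refine Or.inr ⟨hi, ?_⟩
        have : i.val - n < k := by omega
        rw [Nat.mod_eq_of_lt (by omega)]
        omega
    · rintro (⟨h1, h2⟩ | ⟨h1, h2⟩)
      · exact congrArg some (Fin.ext (by omega)).symm
      · refine congrArg some (Fin.ext ?_).symm
        rw [Nat.mod_eq_of_lt (by omega)] at h2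
        omega
  | succ a ih =>
    rw [pow_succ, pe_mul_apply, Option.bind_eq_some_iff]
    constructor
    · rintro ⟨m, h1, h2⟩
      rcases (ih m).1 h1 with ⟨hc1, hc2⟩ | ⟨hc1, hc2⟩ <;>
        rcases (hf m j).1 h2 with ⟨hd1, hd2⟩ | ⟨hd1, _, hd2⟩
      · exact Or.inl ⟨by omega, by omega⟩
      · omega
      · omega
      · refine Or.inr ⟨hc1, ?_⟩
        rw [hd2, hc2]
        have h3 : n + (i.val - n + a) % k + 1 - n = (i.val - n + a) % k + 1 := by omega
        rw [h3, Nat.mod_add_mod, Nat.add_assoc]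
    · rintro (⟨h1, h2⟩ | ⟨h1, h2⟩)
      · refine ⟨⟨i.val + a, by omega⟩, (ih _).2 (Or.inl ⟨by omega, rfl⟩),
          (hf _ j).2 (Or.inl ⟨?_, ?_⟩)⟩
        · show i.val + a + 1 < n
          omega
        · show j.val = i.val + a + 1
          omega
      · have hmod : (i.val - n + a) % k < k := Nat.mod_lt _ hk
        refine ⟨⟨n + (i.val - n + a) % k, by omega⟩, (ih _).2 (Or.inr ⟨h1, rfl⟩),
          (hf _ j).2 (Or.inr ⟨?_, hk, ?_⟩)⟩
        · show n ≤ n + (i.val - n + a) % k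
          omega
        · show j.val = n + ((n + (i.val - n + a) % k + 1 - n) % k)
          have h3 : n + (i.val - n + a) % k + 1 - n = (i.val - n + a) % k + 1 := by omega
          rw [h3, Nat.mod_add_mod, h2, Nat.add_assoc]

end Eval
end SNK
namespace SNK
section Eval2
variable {n k : ℕ} {f : PEquiv (Fin (n + k)) (Fin (n + k))}
variable (hk : 1 ≤ k) (hf : IsChainCycle f)
include hk hf

lemma N_eval_chain (a b t : ℕ) (i j : Fin (n + k)) (hi : i.val < n) :
    (f ^ a * (f ^ b).symm * f ^ t) i = some j ↔
      (b ≤ i.val + a ∧ i.val + a < n ∧ i.val + a - b + t < n ∧ j.val = i.val + a - b + t) := by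
  rw [pe_mul_apply, pe_mul_apply, Option.bind_eq_some_iff]
  simp only [Option.bind_eq_some_iff]
  constructor
  · rintro ⟨m2, ⟨m1, h1, h2⟩, h3⟩
    rcases (fpow_spec hk hf a i m1).1 h1 with ⟨ha1, ha2⟩ | ⟨ha1, _⟩
    · rw [PEquiv.eq_some_iff] at h2
      rcases (fpow_spec hk hf b m2 m1).1 h2 with ⟨hb1, hb2⟩ | ⟨hb1, hb2⟩
      · rcases (fpow_spec hk hf t m2 j).1 h3 with ⟨hc1, hc2⟩ | ⟨hc1, hc2⟩
        · exact ⟨by omega, by omega, by omega, by omega⟩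
        · omega
      · omega
    · omega
  · rintro ⟨hb, hn, hjn, hj⟩
    refine ⟨⟨i.val + a - b, by omega⟩, ⟨⟨i.val + a, by omega⟩,
      (fpow_spec hk hf a i _).2 (Or.inl ⟨hn, rfl⟩),
      (PEquiv.eq_some_iff _).2 ((fpow_spec hk hf b _ _).2 (Or.inl ⟨?_, ?_⟩))⟩,
      (fpow_spec hk hf t _ j).2 (Or.inl ⟨?_, ?_⟩)⟩
    · show i.val + a - b + b < n
      omega
    · show (i.val + a : ℕ) = i.val + a - b + b
      omega
    · show i.val + a - b + t < n
      omega
    · show j.val = i.val + a - b + t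
      omega

lemma N_eval_mk (a b t u v : ℕ) (hu : u < n + k) (hv : v < n + k)
    (h1 : b ≤ u + a) (h2 : u + a < n) (h3 : u + a - b + t < n) (h4 : v = u + a - b + t) :
    (f ^ a * (f ^ b).symm * f ^ t) ⟨u, hu⟩ = some ⟨v, hv⟩ :=
  (N_eval_chain hk hf a b t ⟨u, hu⟩ ⟨v, hv⟩ (show u < n by omega)).2 ⟨h1, h2, h3, h4⟩

lemma N_eval_mk_rev (a b t u v : ℕ) (hu : u < n + k) (hv : v < n + k) (hun : u < n)
    (h : (f ^ a * (f ^ b).symm * f ^ t) ⟨u, hu⟩ = some ⟨v, hv⟩) :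
    b ≤ u + a ∧ u + a < n ∧ u + a - b + t < n ∧ v = u + a - b + t :=
  (N_eval_chain hk hf a b t ⟨u, hu⟩ ⟨v, hv⟩ hun).1 h

lemma fpow_none_low (i : Fin (n + k)) (hi : i.val < n) : (f ^ n) i = none := by
  cases h : (f ^ n) i with
  | none => rfl
  | some c =>
    rcases (fpow_spec hk hf n i c).1 h with ⟨h1, _⟩ | ⟨h1, _⟩ <;> omega

lemma G_eval (r : ℕ) (i : Fin (n + k)) (hi : i.val = n) :
    ∃ j : Fin (n + k), j.val = n + r % k ∧ (f ^ n * (f ^ n).symm * f ^ r) i = some j := by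
  have hmod : n % k < k := Nat.mod_lt _ hk
  have hrmod : r % k < k := Nat.mod_lt _ hk
  have h1 : (f ^ n) i = some ⟨n + n % k, by omega⟩ := by
    refine (fpow_spec hk hf n i _).2 (Or.inr ⟨by omega, ?_⟩)
    show n + n % k = n + ((i.val - n + n) % k)
    rw [hi, Nat.sub_self, Nat.zero_add]
  have h2 : (f ^ n).symm ⟨n + n % k, by omega⟩ = some i := (PEquiv.eq_some_iff _).2 h1
  have h3 : (f ^ r) i = some ⟨n + r % k, by omega⟩ := by
    refine (fpow_spec hk hf r i _).2 (Or.inr ⟨by omega, ?_⟩)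
    show n + r % k = n + ((i.val - n + r) % k)
    rw [hi, Nat.sub_self, Nat.zero_add]
  refine ⟨⟨n + r % k, by omega⟩, rfl, ?_⟩
  rw [pe_mul_apply, pe_mul_apply, h1, Option.bind_some, h2, Option.bind_some, h3]

lemma NN_inj {a b t a' b' t' : ℕ} (hab : a ≤ b) (htb : t ≤ b) (hbn : b < n)
    (hab' : a' ≤ b') (htb' : t' ≤ b') (hbn' : b' < n)
    (h : f ^ a * (f ^ b).symm * f ^ t = f ^ a' * (f ^ b').symm * f ^ t') :
    a = a' ∧ b = b' ∧ t = t' := by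
  have hn : 0 < n := by omega
  have e0 : (f ^ a * (f ^ b).symm * f ^ t) ⟨b - a, by omega⟩ = some ⟨t, by omega⟩ :=
    N_eval_mk hk hf a b t _ _ (by omega) (by omega) (by omega) (by omega) (by omega) (by omega)
  rw [h] at e0
  obtain ⟨c1, c2, -, c4⟩ :=
    N_eval_mk_rev hk hf a' b' t' (b - a) t (by omega) (by omega) (by omega) e0
  have e1 : (f ^ a' * (f ^ b').symm * f ^ t') ⟨b' - a', by omega⟩ = some ⟨t', by omega⟩ :=
    N_eval_mk hk hf a' b' t' _ _ (by omega) (by omega) (by omega) (by omega) (by omega) (by omega)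
  rw [← h] at e1
  obtain ⟨d1, d2, -, d4⟩ :=
    N_eval_mk_rev hk hf a b t (b' - a') t' (by omega) (by omega) (by omega) e1
  have e2 : (f ^ a * (f ^ b).symm * f ^ t) ⟨n - 1 - a, by omega⟩
      = some ⟨n - 1 - b + t, by omega⟩ :=
    N_eval_mk hk hf a b t _ _ (by omega) (by omega) (by omega) (by omega) (by omega) (by omega)
  rw [h] at e2
  obtain ⟨g1, g2, -, -⟩ :=
    N_eval_mk_rev hk hf a' b' t' (n - 1 - a) (n - 1 - b + t)
      (by omega) (by omega) (by omega) e2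
  have e3 : (f ^ a' * (f ^ b').symm * f ^ t') ⟨n - 1 - a', by omega⟩
      = some ⟨n - 1 - b' + t', by omega⟩ :=
    N_eval_mk hk hf a' b' t' _ _ (by omega) (by omega) (by omega) (by omega) (by omega) (by omega)
  rw [← h] at e3
  obtain ⟨j1, j2, -, -⟩ :=
    N_eval_mk_rev hk hf a b t (n - 1 - a') (n - 1 - b' + t')
      (by omega) (by omega) (by omega) e3
  omega

lemma NG_inj {a b t r : ℕ} (hab : a ≤ b) (htb : t ≤ b) (hbn : b < n)
    (h : f ^ a * (f ^ b).symm * f ^ t = f ^ n * (f ^ n).symm * f ^ r) : False := by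
  have e0 : (f ^ a * (f ^ b).symm * f ^ t) ⟨b - a, by omega⟩ = some ⟨t, by omega⟩ :=
    N_eval_mk hk hf a b t _ _ (by omega) (by omega) (by omega) (by omega) (by omega) (by omega)
  have e1 : (f ^ n * (f ^ n).symm * f ^ r) ⟨b - a, by omega⟩ = none := by
    rw [pe_mul_apply, pe_mul_apply, fpow_none_low hk hf _ (show b - a < n by omega)]
    rfl
  rw [h, e1] at e0
  exact nomatch e0

lemma GG_inj {r r' : ℕ} (hr : r < k) (hr' : r' < k)
    (h : f ^ n * (f ^ n).symm * f ^ r = f ^ n * (f ^ n).symm * f ^ r') : r = r' := by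
  obtain ⟨j, hj, e⟩ := G_eval hk hf r (⟨n, by omega⟩ : Fin (n + k)) rfl
  obtain ⟨j', hj', e'⟩ := G_eval hk hf r' (⟨n, by omega⟩ : Fin (n + k)) rfl
  rw [h, e'] at e
  have hjj : j' = j := Option.some_injective _ e
  subst hjj
  rw [hj'] at hj
  rw [Nat.mod_eq_of_lt hr, Nat.mod_eq_of_lt hr'] at hj
  omega

end Eval2
end SNK

namespace SNK
section Main
variable {n k : ℕ}

def psi (f : PEquiv (Fin (n + k)) (Fin (n + k))) :
    FreeMonoid Bool →* PEquiv (Fin (n + k)) (Fin (n + k)) :=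
  FreeMonoid.lift (fun b => bif b then f else f.symm)

variable (f : PEquiv (Fin (n + k)) (Fin (n + k)))

lemma psi_X : psi f X = f := rfl
lemma psi_Xi : psi f Xi = f.symm := rfl

lemma pe_mul_symm (g h : PEquiv (Fin (n + k)) (Fin (n + k))) :
    (g * h).symm = h.symm * g.symm := PEquiv.symm_trans_rev g h

lemma psi_winv (w : FreeMonoid Bool) : psi f (winv w) = (psi f w).symm := by
  induction w using FreeMonoid.recOn with
  | one =>
    rw [winv_one, map_one]
    rfl
  | of_mul g w ihw =>
    have hof : winv (FreeMonoid.of g) = FreeMonoid.of (!g) := rfl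
    rw [winv_mul, map_mul, map_mul, pe_mul_symm, ihw, hof]
    congr 1
    cases g <;> rfl

variable (hk : 1 ≤ k) (hf : IsChainCycle f)
include hk hf

lemma fpow_isSome {m : ℕ} (hm : n ≤ m) (i : Fin (n + k)) :
    ((f ^ m) i).isSome = true ↔ n ≤ i.val := by
  rw [Option.isSome_iff_exists]
  constructor
  · rintro ⟨j, hj⟩
    rcases (fpow_spec hk hf m i j).1 hj with ⟨h1, _⟩ | ⟨h1, _⟩ <;> omega
  · intro h
    have hmod : (i.val - n + m) % k < k := Nat.mod_lt _ hk
    exact ⟨⟨n + (i.val - n + m) % k, by omega⟩, (fpow_spec hk hf m i _).2 (Or.inr ⟨h, rfl⟩)⟩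

lemma rel1_pe : f ^ n * (f ^ n).symm = f ^ (n + 1) * (f ^ (n + 1)).symm := by
  apply PEquiv.ext; intro i
  rw [pe_idem_apply, pe_idem_apply]
  have h1 := fpow_isSome f hk hf (le_refl n) i
  have h2 := fpow_isSome f hk hf (Nat.le_succ n) i
  rw [Bool.eq_iff_iff.2 (h1.trans h2.symm)]

lemma rel2_pe : f ^ n * (f ^ n).symm = f ^ n * (f ^ n).symm * f ^ k := by
  apply PEquiv.ext; intro i
  have hR : (f ^ n * (f ^ n).symm * f ^ k) i = ((f ^ n * (f ^ n).symm) i).bind (f ^ k) := rfl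
  rw [hR, pe_idem_apply]
  by_cases hs : ((f ^ n) i).isSome = true
  · have hni : n ≤ i.val := (fpow_isSome f hk hf (le_refl n) i).1 hs
    have hfk : (f ^ k) i = some i := by
      refine (fpow_spec hk hf k i i).2 (Or.inr ⟨hni, ?_⟩)
      rw [Nat.add_mod_right, Nat.mod_eq_of_lt (by omega)]
      omega
    simp [hs, hfk]
  · simp [hs]

lemma hker : snkCon n k ≤ Con.ker (psi f) := by
  refine Con.conGen_le.2 ?_
  rintro u v (hv | ⟨rfl, rfl⟩ | ⟨rfl, rfl⟩)
  · rcases hv with ⟨w, rfl, rfl⟩ | ⟨w, z, rfl, rfl⟩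
    · rw [Con.ker_rel]
      simp only [map_mul, psi_winv]
      exact pe_vagner1 _
    · rw [Con.ker_rel]
      simp only [map_mul, psi_winv]
      exact pe_vagner2 _ _
  · rw [Con.ker_rel]
    simp only [map_mul, map_pow, psi_X, psi_Xi, symm_pow]
    exact rel1_pe f hk hf
  · rw [Con.ker_rel]
    simp only [map_mul, map_pow, psi_X, psi_Xi, symm_pow]
    exact rel2_pe f hk hf

end Main
end SNK

theorem snk_presentation_iso (n k : ℕ) (hk : 1 ≤ k)
    (f : PEquiv (Fin (n + k)) (Fin (n + k))) (hf : IsChainCycle f) :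
    Nonempty ((snkCon n k).Quotient ≃*
      (Submonoid.closure {f, f.symm} : Submonoid (PEquiv (Fin (n + k)) (Fin (n + k))))) := by
  set φ : (snkCon n k).Quotient →* PEquiv (Fin (n + k)) (Fin (n + k)) :=
    (snkCon n k).lift (SNK.psi f) (SNK.hker f hk hf) with hφdef
  have hφx : φ (SNK.xg n k) = f := Con.lift_mk' _ X
  have hφy : φ (SNK.yg n k) = f.symm := Con.lift_mk' _ Xi
  have hcanon : ∀ a b t : ℕ,
      φ (SNK.xg n k ^ a * SNK.yg n k ^ b * SNK.xg n k ^ t) = f ^ a * (f ^ b).symm * f ^ t := by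
    intro a b t
    rw [map_mul, map_mul, map_pow, map_pow, map_pow, hφx, hφy, SNK.symm_pow]
  have hinj : Function.Injective φ := by
    intro m1 m2 h12
    rcases SNK.normal_form n k hk m1 with ⟨a, b, t, hab, htb, hbn, rfl⟩ | ⟨r, hr, rfl⟩ <;>
      rcases SNK.normal_form n k hk m2 with ⟨a', b', t', hab', htb', hbn', rfl⟩ | ⟨r', hr', rfl⟩
    · rw [hcanon, hcanon] at h12
      obtain ⟨rfl, rfl, rfl⟩ := SNK.NN_inj hk hf hab htb hbn hab' htb' hbn' h12
      rfl
    · rw [hcanon, hcanon] at h12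
      exact absurd h12 (fun h => SNK.NG_inj hk hf hab htb hbn h)
    · rw [hcanon, hcanon] at h12
      exact absurd h12.symm (fun h => SNK.NG_inj hk hf hab' htb' hbn' h)
    · rw [hcanon, hcanon] at h12
      obtain rfl := SNK.GG_inj hk hf hr hr' h12
      rfl
  have hmem : ∀ m, φ m ∈ Submonoid.closure {f, f.symm} := by
    intro m
    obtain ⟨w, rfl⟩ := Con.mk'_surjective (c := snkCon n k) m
    rw [Con.lift_mk']
    induction w using FreeMonoid.recOn with
    | one => exact Submonoid.one_mem _
    | of_mul g w ihw =>
      rw [map_mul]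
      refine mul_mem ?_ ihw
      cases g
      · exact Submonoid.subset_closure (Set.mem_insert_iff.2 (Or.inr rfl))
      · exact Submonoid.subset_closure (Set.mem_insert _ _)
  have hsurj : ∀ z ∈ Submonoid.closure {f, f.symm}, ∃ m, φ m = z := by
    intro z hz
    induction hz using Submonoid.closure_induction with
    | mem z hz =>
      rcases Set.mem_insert_iff.1 hz with rfl | hz
      · exact ⟨SNK.xg n k, hφx⟩
      · rw [Set.mem_singleton_iff] at hz
        subst hz
        exact ⟨SNK.yg n k, hφy⟩
    | one => exact ⟨1, map_one _⟩
    | mul z1 z2 h1 h2 ih1 ih2 =>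
      obtain ⟨m1, rfl⟩ := ih1
      obtain ⟨m2, rfl⟩ := ih2
      exact ⟨m1 * m2, map_mul _ _ _⟩
  refine ⟨MulEquiv.ofBijective (MonoidHom.codRestrict φ _ hmem) ⟨?_, ?_⟩⟩
  · intro m1 m2 h
    exact hinj (congrArg Subtype.val h)
  · rintro ⟨z, hz⟩
    obtain ⟨m, hm⟩ := hsurj z hz
    exact ⟨m, Subtype.ext hm⟩
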